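/- Let A be a locally finite hyperplane arrangement in ℝⁿ and x₀ a point generic with respect to A. Then x₀ is generic with respect to every subarrangement A' ⊆ A. -/

import Mathlib

open Metric Set MeasureTheory

noncomputable section

/-- A locally finite arrangement of affine hyperplanes in ℝⁿ, given by affine
equations `⟪a i, x⟫ = b i` with `a i ≠ 0`, indexed injectively by `ι`. -/
structure Arrangement (n : ℕ) (ι : Type) where
  a : ι → EuclideanSpace ℝ (Fin n)
  b : ι → ℝ
  ha : ∀ i, a i ≠ 0
  inj : Function.Injective fun i => {x : EuclideanSpace ℝ (Fin n) | (inner ℝ (a i) x : ℝ) = b i}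
  locFin : ∀ x : EuclideanSpace ℝ (Fin n), ∃ ε > 0,
    {i : ι | ∃ y ∈ Metric.ball x ε, (inner ℝ (a i) y : ℝ) = b i}.Finite

namespace Arrangement

variable {n : ℕ} {ι : Type} (A : Arrangement n ι)

/-- The defining affine functional of the `i`-th hyperplane. -/
def val (i : ι) (x : EuclideanSpace ℝ (Fin n)) : ℝ := (inner ℝ (A.a i) x : ℝ) - A.b i

/-- The `i`-th hyperplane. -/
def hyperplane (i : ι) : Set (EuclideanSpace ℝ (Fin n)) := {x | A.val i x = 0}

/-- The sign vector of a point. -/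
def signAt (x : EuclideanSpace ℝ (Fin n)) : ι → SignType := fun i => SignType.sign (A.val i x)

/-- The (relatively open) stratum with sign vector `σ`. -/
def openCell (σ : ι → SignType) : Set (EuclideanSpace ℝ (Fin n)) :=
  {x | ∀ i, SignType.sign (A.val i x) = σ i}

/-- The (closed) faces of the arrangement: closures of the strata. -/
def IsFace (F : Set (EuclideanSpace ℝ (Fin n))) : Prop :=
  ∃ x : EuclideanSpace ℝ (Fin n), F = closure (A.openCell (A.signAt x))

/-- Chambers: closed faces of codimension 0. -/
def IsChamber (C : Set (EuclideanSpace ℝ (Fin n))) : Prop :=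
  ∃ x : EuclideanSpace ℝ (Fin n), (∀ i, A.val i x ≠ 0) ∧
    C = closure (A.openCell (A.signAt x))

/-- The support of a subset: the hyperplanes containing it. -/
def supp (U : Set (EuclideanSpace ℝ (Fin n))) : Set ι := {i | U ⊆ A.hyperplane i}

/-- The set of hyperplanes separating two chambers. -/
def sep (C C' : Set (EuclideanSpace ℝ (Fin n))) : Set ι :=
  {i | ∀ x ∈ interior C, ∀ y ∈ interior C', A.val i x * A.val i y < 0}

/-- `F` is a face of the chamber (or face) `C`. -/
def IsFaceOf (F C : Set (EuclideanSpace ℝ (Fin n))) : Prop := A.IsFace F ∧ F ⊆ C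

/-- `A.IsCF C F D` means `D = C.F`: `D` is the unique chamber containing `F` and not
separated from `C` by any hyperplane of `supp F`. -/
def IsCF (C F D : Set (EuclideanSpace ℝ (Fin n))) : Prop :=
  A.IsChamber D ∧ F ⊆ D ∧ A.sep C D ∩ A.supp F = ∅

/-- `A.IsOpp D F E` means `E = D^F`: `E` is the chamber opposite to `D` with respect to
its face `F`, i.e. the hyperplanes separating `D` and `E` are exactly those containing `F`. -/
def IsOpp (D F E : Set (EuclideanSpace ℝ (Fin n))) : Prop :=
  A.IsChamber E ∧ F ⊆ E ∧ A.sep D E = A.supp F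

/-- Flats: nonempty intersections of subfamilies of hyperplanes (including ℝⁿ itself). -/
def IsFlat (X : Set (EuclideanSpace ℝ (Fin n))) : Prop :=
  X.Nonempty ∧ ∃ s : Set ι, X = ⋂ i ∈ s, A.hyperplane i

/-- A cell `⟨C, F⟩` of the Salvetti complex: a chamber `C` together with a face `F` of `C`. -/
structure Cell {n : ℕ} {ι : Type} (𝒜 : Arrangement n ι) where
  C : Set (EuclideanSpace ℝ (Fin n))
  F : Set (EuclideanSpace ℝ (Fin n))
  isChamber : 𝒜.IsChamber C
  isFace : 𝒜.IsFace F
  faceLe : F ⊆ C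

/-- The Salvetti order: `⟨C,F⟩ ≤ ⟨D,G⟩` iff `F ⪯ G` (i.e. `F ⊇ G`) and `D.F = C`. -/
def cellLE (c d : A.Cell) : Prop := d.F ⊆ c.F ∧ A.IsCF d.C c.F c.C

/-- The subcomplex `S(C)`: cells `⟨D,F⟩` with `D = C.F`. -/
def inS (C : Set (EuclideanSpace ℝ (Fin n))) (c : A.Cell) : Prop := A.IsCF C c.F c.C

/-- A strict total order on the chambers. -/
def IsChamberOrder (lt : Set (EuclideanSpace ℝ (Fin n)) → Set (EuclideanSpace ℝ (Fin n)) → Prop) :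
    Prop :=
  (∀ C C', A.IsChamber C → A.IsChamber C' → C ≠ C' → lt C C' ∨ lt C' C) ∧
  (∀ C, ¬ lt C C) ∧
  (∀ C C' C'', lt C C' → lt C' C'' → lt C C'')

/-- The upper ideal `J(C)` of the poset of flats determined by a total order on chambers. -/
def J (lt : Set (EuclideanSpace ℝ (Fin n)) → Set (EuclideanSpace ℝ (Fin n)) → Prop)
    (C : Set (EuclideanSpace ℝ (Fin n))) : Set (Set (EuclideanSpace ℝ (Fin n))) :=
  {X | A.IsFlat X ∧ ∀ C', A.IsChamber C' → lt C' C → (A.supp X ∩ A.sep C C').Nonempty}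

/-- A valid order: for each chamber `C`, the ideal `J(C)` is the principal upper ideal
(in the poset of flats ordered by reverse inclusion) generated by `X_C = |F_C|` for some
face `F_C` of `C`. -/
def IsValidOrder
    (lt : Set (EuclideanSpace ℝ (Fin n)) → Set (EuclideanSpace ℝ (Fin n)) → Prop) : Prop :=
  A.IsChamberOrder lt ∧
  ∀ C, A.IsChamber C → ∃ F_C, A.IsFaceOf F_C C ∧
    A.J lt C = {X | A.IsFlat X ∧ X ⊆ (affineSpan ℝ F_C : Set (EuclideanSpace ℝ (Fin n)))}

/-- Membership in `N(C)`: cells of `S(C)` not lying in any earlier `S(C')`. -/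
def inN (lt : Set (EuclideanSpace ℝ (Fin n)) → Set (EuclideanSpace ℝ (Fin n)) → Prop)
    (C : Set (EuclideanSpace ℝ (Fin n))) (c : A.Cell) : Prop :=
  A.inS C c ∧ ∀ C', A.IsChamber C' → lt C' C → ¬ A.inS C' c

/-- A point `x₀` is generic with respect to `A`: (i) chambers at equal distance from `x₀`
have the same metric projection of `x₀`, lying in their intersection; (ii) distances to
strictly comparable flats are strictly comparable. -/
def IsGeneric (x₀ : EuclideanSpace ℝ (Fin n)) : Prop :=
  (∀ C C', A.IsChamber C → A.IsChamber C' → infDist x₀ C = infDist x₀ C' →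
    ∀ p ∈ C, ∀ p' ∈ C', (∀ q ∈ C, dist x₀ p ≤ dist x₀ q) →
      (∀ q ∈ C', dist x₀ p' ≤ dist x₀ q) → p = p' ∧ p ∈ C ∩ C') ∧
  (∀ L L', A.IsFlat L → A.IsFlat L' → L' ⊂ L → infDist x₀ L < infDist x₀ L')

end Arrangement

/-- The subarrangement of `A` indexed by a subset `s ⊆ ι`. -/
def Arrangement.restrict {n : ℕ} {ι : Type} (A : Arrangement n ι) (s : Set ι) :
    Arrangement n s where
  a i := A.a i
  b i := A.b i
  ha i := A.ha i
  inj i j h := Subtype.ext (A.inj h)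
  locFin x := by
    obtain ⟨ε, hε, hfin⟩ := A.locFin x
    refine ⟨ε, hε, ?_⟩
    have : {i : s | ∃ y ∈ Metric.ball x ε, (inner ℝ (A.a i) y : ℝ) = A.b i} ⊆
        Subtype.val ⁻¹' {i : ι | ∃ y ∈ Metric.ball x ε, (inner ℝ (A.a i) y : ℝ) = A.b i} :=
      fun i hi => hi
    exact (hfin.preimage Subtype.val_injective.injOn).subset this


namespace Arrangement

variable {n : ℕ} {ι : Type} (A : Arrangement n ι)

lemma val_continuous' (i : ι) : Continuous (A.val i) :=
  (Continuous.inner continuous_const continuous_id).sub continuous_const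

lemma sign_eq_sign_of_mul_pos' {a b : ℝ} (h : 0 < a * b) :
    SignType.sign a = SignType.sign b := by
  rcases mul_pos_iff.mp h with ⟨ha, hb⟩ | ⟨ha, hb⟩
  · rw [sign_pos ha, sign_pos hb]
  · rw [sign_neg ha, sign_neg hb]

lemma sign_segment' (i : ι) {y z : EuclideanSpace ℝ (Fin n)}
    (h : ∀ w ∈ segment ℝ y z, A.val i w ≠ 0) :
    SignType.sign (A.val i y) = SignType.sign (A.val i z) := by
  have hy := h y (left_mem_segment ℝ y z)
  have hz := h z (right_mem_segment ℝ y z)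
  have hc : ContinuousOn (fun t : ℝ => A.val i (AffineMap.lineMap y z t)) (Set.Icc 0 1) :=
    ((A.val_continuous' i).comp AffineMap.lineMap_continuous).continuousOn
  have h0 : A.val i (AffineMap.lineMap y z (0:ℝ)) = A.val i y := by simp
  have h1 : A.val i (AffineMap.lineMap y z (1:ℝ)) = A.val i z := by simp
  have key : ¬ (A.val i y * A.val i z < 0) := by
    intro hlt
    rcases mul_neg_iff.mp hlt with ⟨hy', hz'⟩ | ⟨hy', hz'⟩
    · obtain ⟨t, ht, h0t⟩ := intermediate_value_Icc' (by norm_num : (0:ℝ) ≤ 1) hc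
        (show (0:ℝ) ∈ Set.Icc _ _ by rw [h0, h1]; exact ⟨hz'.le, hy'.le⟩)
      exact h _ (by rw [segment_eq_image_lineMap]; exact ⟨t, ht, rfl⟩) h0t
    · obtain ⟨t, ht, h0t⟩ := intermediate_value_Icc (by norm_num : (0:ℝ) ≤ 1) hc
        (show (0:ℝ) ∈ Set.Icc _ _ by rw [h0, h1]; exact ⟨hy'.le, hz'.le⟩)
      exact h _ (by rw [segment_eq_image_lineMap]; exact ⟨t, ht, rfl⟩) h0t
  rcases lt_or_gt_of_ne hy with hy' | hy' <;> rcases lt_or_gt_of_ne hz with hz' | hz'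
  · rw [sign_neg hy', sign_neg hz']
  · exact absurd (mul_neg_of_neg_of_pos hy' hz') key
  · exact absurd (mul_neg_of_pos_of_neg hy' hz') key
  · rw [sign_pos hy', sign_pos hz']

lemma exists_val_ne' (i : ι) {O : Set (EuclideanSpace ℝ (Fin n))} (hO : IsOpen O)
    (hne : O.Nonempty) : ∃ z ∈ O, A.val i z ≠ 0 := by
  by_contra hcon
  push_neg at hcon
  obtain ⟨w, hw⟩ := hne
  obtain ⟨r, hr, hball⟩ := Metric.isOpen_iff.mp hO w hw
  have hnorm : 0 < ‖A.a i‖ := norm_pos_iff.mpr (A.ha i)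
  set c : ℝ := r / (2 * ‖A.a i‖) with hc
  have hcpos : 0 < c := div_pos hr (by positivity)
  have hcn : c * ‖A.a i‖ = r / 2 := by
    rw [hc]; field_simp
  have hmem : w + c • A.a i ∈ Metric.ball w r := by
    rw [Metric.mem_ball, dist_eq_norm, add_sub_cancel_left, norm_smul, Real.norm_eq_abs,
      abs_of_pos hcpos, hcn]
    linarith
  have h1 := hcon w hw
  have h2 := hcon _ (hball hmem)
  have hval : A.val i (w + c • A.a i) = A.val i w + c * ‖A.a i‖ ^ 2 := by
    simp only [Arrangement.val, inner_add_right, real_inner_smul_right,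
      real_inner_self_eq_norm_sq]
    ring
  nlinarith [sq_nonneg ‖A.a i‖]

lemma exists_avoid' {t : Set ι} (ht : t.Finite) :
    ∀ O : Set (EuclideanSpace ℝ (Fin n)), IsOpen O → O.Nonempty →
      ∃ z ∈ O, ∀ i ∈ t, A.val i z ≠ 0 := by
  refine Set.Finite.induction_on
    (motive := fun t _ => ∀ O : Set (EuclideanSpace ℝ (Fin n)), IsOpen O → O.Nonempty →
      ∃ z ∈ O, ∀ i ∈ t, A.val i z ≠ 0) t ht ?_ ?_
  · rintro O hO ⟨z, hz⟩
    exact ⟨z, hz, fun i hi => absurd hi (Set.notMem_empty i)⟩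
  · intro a u ha hu IH O hO hne
    obtain ⟨z₀, hz₀, hz₀'⟩ := A.exists_val_ne' a hO hne
    have hO' : IsOpen (O ∩ A.val a ⁻¹' ({(0:ℝ)}ᶜ)) :=
      hO.inter (isOpen_compl_singleton.preimage (A.val_continuous' a))
    obtain ⟨z, ⟨hzO, hza⟩, hz⟩ := IH _ hO' ⟨z₀, hz₀, hz₀'⟩
    refine ⟨z, hzO, fun i hi => ?_⟩
    rcases Set.mem_insert_iff.mp hi with rfl | hi
    · exact hza
    · exact hz i hi

lemma exists_chamber_subset' {s : Set ι} {C : Set (EuclideanSpace ℝ (Fin n))}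
    (hC : (A.restrict s).IsChamber C) {p : EuclideanSpace ℝ (Fin n)} (hp : p ∈ C) :
    ∃ D, A.IsChamber D ∧ p ∈ D ∧ D ⊆ C := by
  obtain ⟨x, hx, rfl⟩ := hC
  set U := (A.restrict s).openCell ((A.restrict s).signAt x) with hU
  obtain ⟨ε₀, hε₀, hI⟩ := A.locFin p
  set I := {i : ι | ∃ y ∈ Metric.ball p ε₀, (inner ℝ (A.a i) y : ℝ) = A.b i} with hIdef
  have hnotI : ∀ i ∉ I, ∀ y ∈ Metric.ball p ε₀, A.val i y ≠ 0 := by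
    intro i hi y hy hval
    exact hi ⟨y, hy, by simpa [Arrangement.val, sub_eq_zero] using hval⟩
  set W := {z | z ∈ Metric.ball p ε₀ ∧ (∀ i, A.val i z ≠ 0) ∧
    ∀ i ∈ s, SignType.sign (A.val i z) = SignType.sign (A.val i x)} with hW
  have hpW : p ∈ closure W := by
    rw [Metric.mem_closure_iff]
    intro δ hδ
    set δ' := min δ ε₀ with hδ'
    have hδ'pos : 0 < δ' := lt_min hδ hε₀
    obtain ⟨y, hyU, hyd⟩ := Metric.mem_closure_iff.mp hp (δ'/2) (by positivity)
    obtain ⟨εy, hεy, hJfin⟩ := A.locFin y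
    set J := {i : ι | ∃ w ∈ Metric.ball y εy, (inner ℝ (A.a i) w : ℝ) = A.b i} with hJdef
    have hnotJ : ∀ i ∉ J, ∀ w ∈ Metric.ball y εy, A.val i w ≠ 0 := by
      intro i hi w hw hval
      exact hi ⟨w, hw, by simpa [Arrangement.val, sub_eq_zero] using hval⟩
    have hysign : ∀ i ∈ s, SignType.sign (A.val i y) = SignType.sign (A.val i x) :=
      fun i hi => hyU ⟨i, hi⟩
    have hyne : ∀ i ∈ s, A.val i y ≠ 0 := by
      intro i hi hval
      have hxne : A.val i x ≠ 0 := hx ⟨i, hi⟩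
      have := hysign i hi
      rw [hval, sign_zero] at this
      exact hxne (sign_eq_zero_iff.mp this.symm)
    set O := (Metric.ball p δ' ∩ Metric.ball y εy) ∩
      ⋂ i ∈ J ∩ s, {z | 0 < A.val i z * A.val i y} with hO
    have hOopen : IsOpen O := by
      refine (isOpen_ball.inter isOpen_ball).inter ((hJfin.inter_of_left s).isOpen_biInter ?_)
      intro i _
      exact isOpen_lt continuous_const ((A.val_continuous' i).mul continuous_const)
    have hyO : y ∈ O := by
      refine ⟨⟨?_, Metric.mem_ball_self hεy⟩, ?_⟩
      · rw [Metric.mem_ball, dist_comm]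
        calc dist p y < δ' / 2 := hyd
          _ < δ' := by linarith
      · refine Set.mem_biInter fun i hi => ?_
        exact mul_self_pos.mpr (hyne i hi.2)
    obtain ⟨z, hzO, hz⟩ := A.exists_avoid' hJfin O hOopen ⟨y, hyO⟩
    obtain ⟨⟨hzp, hzy⟩, hzsign⟩ := hzO
    have hzW : z ∈ W := by
      refine ⟨?_, ?_, ?_⟩
      · rw [Metric.mem_ball] at hzp ⊢
        exact lt_of_lt_of_le hzp (min_le_right _ _)
      · intro i
        by_cases hiJ : i ∈ J
        · exact hz i hiJ
        · exact hnotJ i hiJ z hzy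
      · intro i hi
        by_cases hiJ : i ∈ J
        · have hmem := Set.mem_iInter₂.mp hzsign i ⟨hiJ, hi⟩
          exact (sign_eq_sign_of_mul_pos' hmem).trans (hysign i hi)
        · have hseg : segment ℝ z y ⊆ Metric.ball y εy :=
            (convex_ball y εy).segment_subset hzy (Metric.mem_ball_self hεy)
          have := A.sign_segment' i (fun w hw => hnotJ i hiJ w (hseg hw))
          exact this.trans (hysign i hi)
    refine ⟨z, hzW, ?_⟩
    rw [dist_comm]
    exact lt_of_lt_of_le (Metric.mem_ball.mp hzp) (min_le_left _ _)
  -- finitely many sign vectors on W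
  have hker : ∀ z ∈ W, ∀ i ∉ I, SignType.sign (A.val i z) = SignType.sign (A.val i p) := by
    intro z hz i hi
    have hseg : segment ℝ z p ⊆ Metric.ball p ε₀ :=
      (convex_ball p ε₀).segment_subset hz.1 (Metric.mem_ball_self hε₀)
    exact A.sign_segment' i (fun w hw => hnotI i hi w (hseg hw))
  have hfin : (A.signAt '' W).Finite := by
    haveI := hI.to_subtype
    have hinj : Set.InjOn (fun τ : ι → SignType => fun i : ↥I => τ i) (A.signAt '' W) := by
      rintro τ ⟨z, hz, rfl⟩ τ' ⟨z', hz', rfl⟩ hee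
      funext i
      by_cases hi : i ∈ I
      · exact congrFun hee ⟨i, hi⟩
      · exact (hker z hz i hi).trans (hker z' hz' i hi).symm
    exact Set.Finite.of_finite_image (Set.finite_univ.subset (Set.subset_univ _)) hinj
  have hWsub : W ⊆ ⋃ τ ∈ A.signAt '' W, A.openCell τ := fun z hz =>
    Set.mem_biUnion (Set.mem_image_of_mem _ hz) (fun i => rfl)
  have hpcl : p ∈ ⋃ τ ∈ A.signAt '' W, closure (A.openCell τ) := by
    rw [← hfin.closure_biUnion]
    exact closure_mono hWsub hpW
  simp only [Set.mem_iUnion] at hpcl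
  obtain ⟨τ, ⟨z, hzW, rfl⟩, hpD⟩ := hpcl
  refine ⟨closure (A.openCell (A.signAt z)), ⟨z, hzW.2.1, rfl⟩, hpD, ?_⟩
  apply closure_mono
  intro w hw j
  exact (hw j.1).trans (hzW.2.2 j.1 j.2)

end Arrangement

/-- A point generic with respect to `A` is generic with respect to every subarrangement. -/
theorem stmt14 {n : ℕ} {ι : Type} (A : Arrangement n ι)
    (x₀ : EuclideanSpace ℝ (Fin n)) (h : A.IsGeneric x₀) (s : Set ι) :
    (A.restrict s).IsGeneric x₀ := by
  constructor
  · intro C C' hC hC' hdist p hp p' hp' hmin hmin'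
    obtain ⟨D, hD, hpD, hDC⟩ := A.exists_chamber_subset' hC hp
    obtain ⟨D', hD', hpD', hDC'⟩ := A.exists_chamber_subset' hC' hp'
    haveI : Nonempty ↥C := ⟨⟨p, hp⟩⟩
    haveI : Nonempty ↥C' := ⟨⟨p', hp'⟩⟩
    have hCp : infDist x₀ C = dist x₀ p :=
      le_antisymm (infDist_le_dist_of_mem hp)
        (by rw [infDist_eq_iInf]; exact le_ciInf fun q => hmin q q.2)
    have hCp' : infDist x₀ C' = dist x₀ p' :=
      le_antisymm (infDist_le_dist_of_mem hp')
        (by rw [infDist_eq_iInf]; exact le_ciInf fun q => hmin' q q.2)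
    have hDp : infDist x₀ D = dist x₀ p :=
      le_antisymm (infDist_le_dist_of_mem hpD)
        (hCp ▸ infDist_le_infDist_of_subset hDC ⟨p, hpD⟩)
    have hDp' : infDist x₀ D' = dist x₀ p' :=
      le_antisymm (infDist_le_dist_of_mem hpD')
        (hCp' ▸ infDist_le_infDist_of_subset hDC' ⟨p', hpD'⟩)
    have hdd : infDist x₀ D = infDist x₀ D' := by
      rw [hDp, hDp', ← hCp, ← hCp', hdist]
    obtain ⟨heq, hmem⟩ := h.1 D D' hD hD' hdd p hpD p' hpD'
      (fun q hq => hmin q (hDC hq)) (fun q hq => hmin' q (hDC' hq))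
    exact ⟨heq, hp, heq ▸ hp'⟩
  · intro L L' hL hL' hsub
    have conv : ∀ {X : Set (EuclideanSpace ℝ (Fin n))},
        (A.restrict s).IsFlat X → A.IsFlat X := by
      rintro X ⟨hne, t, rfl⟩
      refine ⟨hne, Subtype.val '' t, ?_⟩
      rw [Set.biInter_image]
      rfl
    exact h.2 L L' (conv hL) (conv hL') hsub
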